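/- Let q be a prime power, let d be an even positive integer, and let k = d/2 + 1. Let R_k^good denote the image under Z of the set of good pairs, and let N_g := (∏_{i=0}^{k-1}(q-i)) · (q-1)^k. Then (q^{d+1} - |R_k^good|) · N_g² ≤ (d+1)^{d+2} · q^{3d+4}. In particular, for fixed d, |R_k^good|/q^{d+1} = 1 - O(1/q). -/

import Mathlib

open Finset

set_option linter.unusedSectionVars false

section AuxStmt17

variable {F : Type*} [Field F] [Fintype F] [DecidableEq F]



lemma aux_sum_ite {k : ℕ} (x a : Fin k → F) (j : ℕ) :
    ∑ t : F, (∑ i, if x i = t then a i else 0) * t ^ j = ∑ i, a i * x i ^ j := by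
  have h : ∀ t : F, (∑ i, if x i = t then a i else 0) * t ^ j
      = ∑ i, if x i = t then a i * t ^ j else 0 := by
    intro t
    rw [Finset.sum_mul]
    exact Finset.sum_congr rfl fun i _ => by split <;> simp
  simp_rw [h]
  rw [Finset.sum_comm]
  refine Finset.sum_congr rfl fun i _ => ?_
  simp [Finset.sum_ite_eq]

lemma moments_zero (d : ℕ) (S : Finset F) (hS : S.card ≤ d + 1) (c : F → F)
    (h0 : ∀ t, t ∉ S → c t = 0) (hm : ∀ j, j ≤ d → ∑ t : F, c t * t ^ j = 0) :
    ∀ t, c t = 0 := by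
  have hmS : ∀ j, j ≤ d → ∑ t ∈ S, c t * t ^ j = 0 := by
    intro j hj
    rw [← hm j hj]
    exact Finset.sum_subset (Finset.subset_univ S)
      (fun t _ ht => by rw [h0 t ht, zero_mul])
  intro t0
  by_cases ht0 : t0 ∈ S
  · set P : Polynomial F := ∏ s ∈ S.erase t0, (Polynomial.X - Polynomial.C s) with hP
    have hdeg : P.natDegree = (S.erase t0).card := by
      rw [hP, Polynomial.natDegree_prod_of_monic _ _ fun s _ => Polynomial.monic_X_sub_C s]
      simp [Polynomial.natDegree_X_sub_C]
    have hcard1 : 1 ≤ S.card := Finset.card_pos.mpr ⟨t0, ht0⟩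
    have hdeg' : P.natDegree < d + 1 := by
      rw [hdeg, Finset.card_erase_of_mem ht0]; omega
    have heval : ∀ t, P.eval t = ∏ s ∈ S.erase t0, (t - s) := by
      intro t; simp [hP, Polynomial.eval_prod]
    have key : ∑ t ∈ S, c t * P.eval t = 0 := by
      have h1 : ∀ t ∈ S, c t * P.eval t
          = ∑ j ∈ Finset.range (d + 1), P.coeff j * (c t * t ^ j) := by
        intro t _
        rw [Polynomial.eval_eq_sum_range' hdeg', Finset.mul_sum]
        exact Finset.sum_congr rfl fun j _ => by ring
      rw [Finset.sum_congr rfl h1, Finset.sum_comm]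
      refine Finset.sum_eq_zero fun j hj => ?_
      rw [← Finset.mul_sum, hmS j (Nat.lt_succ_iff.mp (Finset.mem_range.mp hj)), mul_zero]
    have key2 : ∑ t ∈ S, c t * P.eval t = c t0 * P.eval t0 := by
      refine Finset.sum_eq_single_of_mem t0 ht0 fun t ht hne => ?_
      rw [heval t, Finset.prod_eq_zero (Finset.mem_erase.mpr ⟨hne, ht⟩) (sub_self t), mul_zero]
    have hne : P.eval t0 ≠ 0 := by
      rw [heval]
      refine Finset.prod_ne_zero_iff.mpr fun s hs => ?_
      exact sub_ne_zero.mpr (Ne.symm (Finset.ne_of_mem_erase hs))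
    rw [key2] at key
    exact (mul_eq_zero.mp key).resolve_right hne
  · exact h0 t0 ht0

lemma c_moment {k : ℕ} (x x' y y' w w' : Fin k → F) (d : ℕ)
    (hy : ∀ j, j ≤ d → ∑ i, y i * x i ^ j = ∑ i, y' i * x' i ^ j)
    (hw : ∀ j, j ≤ d → ∑ i, w i * x i ^ j = ∑ i, w' i * x' i ^ j)
    (j : ℕ) (hj : j ≤ d) :
    ∑ t : F, ((∑ i, if x i = t then y i - w i else 0)
        - ∑ i, if x' i = t then y' i - w' i else 0) * t ^ j = 0 := by
  simp_rw [sub_mul]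
  rw [Finset.sum_sub_distrib, aux_sum_ite, aux_sum_ite]
  simp_rw [sub_mul]
  rw [Finset.sum_sub_distrib, Finset.sum_sub_distrib, hy j hj, hw j hj]
  ring

lemma nat_pow_sub_le17 (q m : ℕ) : ∀ n : ℕ, q ^ (n + 1) ≤ (q - m) ^ (n + 1) + (n + 1) * m * q ^ n
  | 0 => by simpa using le_tsub_add
  | n + 1 => by
    have ih := nat_pow_sub_le17 q m n
    calc q ^ (n + 2) = q * q ^ (n + 1) := by ring
      _ ≤ q * ((q - m) ^ (n + 1) + (n + 1) * m * q ^ n) := Nat.mul_le_mul_left _ ih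
      _ = q * (q - m) ^ (n + 1) + (n + 1) * m * q ^ (n + 1) := by ring
      _ ≤ ((q - m) + m) * (q - m) ^ (n + 1) + (n + 1) * m * q ^ (n + 1) := by
          gcongr; exact le_tsub_add
      _ = (q - m) ^ (n + 2) + m * (q - m) ^ (n + 1) + (n + 1) * m * q ^ (n + 1) := by ring
      _ ≤ (q - m) ^ (n + 2) + m * q ^ (n + 1) + (n + 1) * m * q ^ (n + 1) := by
          gcongr
          exact Nat.sub_le q m
      _ = (q - m) ^ (n + 2) + (n + 2) * m * q ^ (n + 1) := by ring

def Gd (F : Type*) [Field F] [Fintype F] [DecidableEq F] (k : ℕ) :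
    Finset ((Fin k → F) × (Fin k → F)) :=
  Finset.univ.filter fun p => Function.Injective p.1 ∧ ∀ i, p.2 i ≠ 0

def Zm (F : Type*) [Field F] (k d : ℕ) (p : (Fin k → F) × (Fin k → F)) : Fin (d+1) → F :=
  fun j => ∑ i, p.2 i * p.1 i ^ (j : ℕ)


lemma sum_ite_collapse {k : ℕ} {x : Fin k → F} (hx : Function.Injective x)
    (a : Fin k → F) (i0 : Fin k) :
    ∑ i, (if x i = x i0 then a i else 0) = a i0 := by
  have h : ∀ i, (if x i = x i0 then a i else 0) = if i = i0 then a i else 0 := by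
    intro i; simp [hx.eq_iff]
  simp_rw [h]
  simp [Finset.sum_ite_eq']

lemma uniq_disjoint {d k : ℕ} (hk2 : 2 * k = d + 2) (i0 : Fin k)
    (x x' y y' w w' : Fin k → F)
    (hx : Function.Injective x) (hx' : Function.Injective x')
    (hdisj : ∀ i j, x i ≠ x' j)
    (hy0 : y i0 = w i0)
    (hy : ∀ j, j ≤ d → ∑ i, y i * x i ^ j = ∑ i, y' i * x' i ^ j)
    (hw : ∀ j, j ≤ d → ∑ i, w i * x i ^ j = ∑ i, w' i * x' i ^ j) :
    y = w ∧ y' = w' := by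
  set c : F → F := fun t => (∑ i, if x i = t then y i - w i else 0)
      - ∑ i, if x' i = t then y' i - w' i else 0 with hc
  set U : Finset F := Finset.image x univ ∪ Finset.image x' univ with hU
  have hx0U : x i0 ∈ U := Finset.mem_union_left _ (Finset.mem_image_of_mem _ (Finset.mem_univ _))
  have hcz : ∀ t, c t = 0 := by
    refine moments_zero d (U.erase (x i0)) ?_ c ?_ (c_moment x x' y y' w w' d hy hw)
    · have h1 : U.card ≤ k + k :=
        le_trans (Finset.card_union_le _ _)
          (by gcongr <;> simpa using le_trans (Finset.card_image_le) (by simp))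
      rw [Finset.card_erase_of_mem hx0U]; omega
    · intro t ht
      by_cases hte : t = x i0
      · subst hte
        have h2 : (∑ i, if x' i = x i0 then y' i - w' i else 0) = 0 :=
          Finset.sum_eq_zero fun i _ => by
            rw [if_neg (fun h => hdisj i0 i h.symm)]
        rw [hc]
        simp only [h2, sub_zero]
        rw [sum_ite_collapse hx _ i0, hy0, sub_self]
      · have htU : t ∉ U := fun hmem => ht (Finset.mem_erase.mpr ⟨hte, hmem⟩)
        have h1 : (∑ i, if x i = t then y i - w i else 0) = 0 :=
          Finset.sum_eq_zero fun i _ => by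
            rw [if_neg (fun h => htU (Finset.mem_union_left _
              (Finset.mem_image.mpr ⟨i, Finset.mem_univ i, h⟩)))]
        have h2 : (∑ i, if x' i = t then y' i - w' i else 0) = 0 :=
          Finset.sum_eq_zero fun i _ => by
            rw [if_neg (fun h => htU (Finset.mem_union_right _
              (Finset.mem_image.mpr ⟨i, Finset.mem_univ i, h⟩)))]
        rw [hc]; simp only [h1, h2, sub_zero]
  constructor
  · funext i
    have h := hcz (x i)
    rw [hc] at h
    simp only at h
    rw [sum_ite_collapse hx _ i] at h
    have h2 : (∑ j, if x' j = x i then y' j - w' j else 0) = 0 :=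
      Finset.sum_eq_zero fun j _ => by
        rw [if_neg (fun hh => hdisj i j hh.symm)]
    rw [h2, sub_zero, sub_eq_zero] at h
    exact h
  · funext i
    have h := hcz (x' i)
    rw [hc] at h
    simp only at h
    rw [sum_ite_collapse hx' _ i] at h
    have h1 : (∑ j, if x j = x' i then y j - w j else 0) = 0 :=
      Finset.sum_eq_zero fun j _ => by
        rw [if_neg (hdisj j i)]
    rw [h1, zero_sub, neg_eq_zero, sub_eq_zero] at h
    exact h

lemma uniq_overlap {d k : ℕ} (hk2 : 2 * k = d + 2)
    (x x' y y' w w' : Fin k → F)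
    (hx : Function.Injective x) (hx' : Function.Injective x')
    (hov : ∃ i j, x i = x' j)
    (hagree : ∀ j, (∃ i, x i = x' j) → y' j = w' j)
    (hy : ∀ j, j ≤ d → ∑ i, y i * x i ^ j = ∑ i, y' i * x' i ^ j)
    (hw : ∀ j, j ≤ d → ∑ i, w i * x i ^ j = ∑ i, w' i * x' i ^ j) :
    y = w ∧ y' = w' := by
  set c : F → F := fun t => (∑ i, if x i = t then y i - w i else 0)
      - ∑ i, if x' i = t then y' i - w' i else 0 with hc
  set U : Finset F := Finset.image x univ ∪ Finset.image x' univ with hU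
  obtain ⟨i1, j1, he⟩ := hov
  have hcz : ∀ t, c t = 0 := by
    refine moments_zero d U ?_ c ?_ (c_moment x x' y y' w w' d hy hw)
    · have h1 : U.card + (Finset.image x univ ∩ Finset.image x' univ).card
          = (Finset.image x univ).card + (Finset.image x' univ).card :=
        Finset.card_union_add_card_inter _ _
      have h2 : 1 ≤ (Finset.image x univ ∩ Finset.image x' univ).card := by
        refine Finset.card_pos.mpr ⟨x i1, Finset.mem_inter.mpr
          ⟨Finset.mem_image_of_mem _ (Finset.mem_univ _),
           he ▸ Finset.mem_image_of_mem _ (Finset.mem_univ _)⟩⟩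
      have h3 : (Finset.image x univ).card ≤ k := le_trans Finset.card_image_le (by simp)
      have h4 : (Finset.image x' univ).card ≤ k := le_trans Finset.card_image_le (by simp)
      omega
    · intro t htU
      have h1 : (∑ i, if x i = t then y i - w i else 0) = 0 :=
        Finset.sum_eq_zero fun i _ => by
          rw [if_neg (fun h => htU (Finset.mem_union_left _
            (Finset.mem_image.mpr ⟨i, Finset.mem_univ i, h⟩)))]
      have h2 : (∑ i, if x' i = t then y' i - w' i else 0) = 0 :=
        Finset.sum_eq_zero fun i _ => by
          rw [if_neg (fun h => htU (Finset.mem_union_right _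
            (Finset.mem_image.mpr ⟨i, Finset.mem_univ i, h⟩)))]
      rw [hc]; simp only [h1, h2, sub_zero]
  have hyw' : y' = w' := by
    funext j
    by_cases hex : ∃ i, x i = x' j
    · exact hagree j hex
    · have h := hcz (x' j)
      rw [hc] at h
      simp only at h
      rw [sum_ite_collapse hx' _ j] at h
      have h1 : (∑ i, if x i = x' j then y i - w i else 0) = 0 :=
        Finset.sum_eq_zero fun i _ => by
          rw [if_neg (fun hh => hex ⟨i, hh⟩)]
      rw [h1, zero_sub, neg_eq_zero, sub_eq_zero] at h
      exact h
  refine ⟨?_, hyw'⟩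
  funext i
  have h := hcz (x i)
  rw [hc] at h
  simp only at h
  rw [sum_ite_collapse hx _ i] at h
  have h2 : (∑ j, if x' j = x i then y' j - w' j else 0) = 0 :=
    Finset.sum_eq_zero fun j _ => by
      by_cases hh : x' j = x i
      · rw [if_pos hh, hagree j ⟨i, hh.symm⟩, sub_self]
      · rw [if_neg hh]
  rw [h2, sub_zero, sub_eq_zero] at h
  exact h

variable (F)


lemma card_Gd (k : ℕ) : (Gd F k).card
    = (∏ i ∈ Finset.range k, (Fintype.card F - i)) * (Fintype.card F - 1) ^ k := by
  rw [Gd]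
  have hsplit : (Finset.univ.filter
        (fun p : (Fin k → F) × (Fin k → F) => Function.Injective p.1 ∧ ∀ i, p.2 i ≠ 0))
      = (Finset.univ.filter fun x : Fin k → F => Function.Injective x)
        ×ˢ (Finset.univ.filter fun y : Fin k → F => ∀ i, y i ≠ 0) := by
    rw [← Finset.univ_product_univ]
    ext p
    simp only [Finset.mem_filter, Finset.mem_univ, true_and, Finset.mem_product]
  rw [hsplit, Finset.card_product]
  congr 1
  · have h1 : (Finset.univ.filter fun x : Fin k → F => Function.Injective x).card
        = Fintype.card {x : Fin k → F // Function.Injective x} :=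
      (Fintype.card_subtype _).symm
    rw [h1, Fintype.card_congr (Equiv.subtypeInjectiveEquivEmbedding (Fin k) F),
      Fintype.card_embedding_eq, Fintype.card_fin, Nat.descFactorial_eq_prod_range]
  · have h2 : (Finset.univ.filter fun y : Fin k → F => ∀ i, y i ≠ 0).card
        = Fintype.card {y : Fin k → F // ∀ i, y i ≠ 0} :=
      (Fintype.card_subtype _).symm
    rw [h2, Fintype.card_congr (Equiv.subtypePiEquivPi (p := fun _ (b : F) => b ≠ 0)),
      Fintype.card_fun]
    congr 1
    · have h3 : Fintype.card {b : F // ¬ b = 0} = Fintype.card F - Fintype.card {b : F // b = 0} :=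
        Fintype.card_subtype_compl _
      rw [h3, Fintype.card_subtype_eq]
    · exact Fintype.card_fin k

lemma cs_bound (k d : ℕ) : (Gd F k).card ^ 2
    ≤ ((Gd F k).image (Zm F k d)).card
      * ((Gd F k ×ˢ Gd F k).filter (fun P => Zm F k d P.1 = Zm F k d P.2)).card := by
  set G := Gd F k with hG
  set Sg := G.image (Zm F k d) with hSg
  set f : (Fin (d+1) → F) → ℕ := fun z => (G.filter fun p => Zm F k d p = z).card with hf
  have hGsum : G.card = ∑ z ∈ Sg, f z :=
    Finset.card_eq_sum_card_fiberwise fun p hp => Finset.mem_image_of_mem _ hp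
  have hTsum : ((G ×ˢ G).filter (fun P => Zm F k d P.1 = Zm F k d P.2)).card
      = ∑ z ∈ Sg, f z * f z := by
    have hmem : ∀ P ∈ (G ×ˢ G).filter (fun P => Zm F k d P.1 = Zm F k d P.2),
        Zm F k d P.1 ∈ Sg := by
      intro P hP
      rw [Finset.mem_filter, Finset.mem_product] at hP
      exact Finset.mem_image_of_mem _ hP.1.1
    rw [Finset.card_eq_sum_card_fiberwise hmem]
    refine Finset.sum_congr rfl fun z hz => ?_
    have heq : ((G ×ˢ G).filter (fun P => Zm F k d P.1 = Zm F k d P.2)).filter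
          (fun P => Zm F k d P.1 = z)
        = (G.filter fun p => Zm F k d p = z) ×ˢ (G.filter fun p => Zm F k d p = z) := by
      ext P
      simp only [Finset.mem_filter, Finset.mem_product]
      constructor
      · rintro ⟨⟨⟨hg1, hg2⟩, hzz⟩, hz1⟩
        exact ⟨⟨hg1, hz1⟩, hg2, hzz ▸ hz1⟩
      · rintro ⟨⟨hg1, hz1⟩, hg2, hz2⟩
        exact ⟨⟨⟨hg1, hg2⟩, hz1.trans hz2.symm⟩, hz1⟩
    rw [heq, Finset.card_product]
  rw [hGsum, hTsum]
  have h := sq_sum_le_card_mul_sum_sq (s := Sg) (f := fun z => (f z : ℕ))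
  simpa [sq] using h

lemma T_le (d k : ℕ) (hk2 : 2 * k = d + 2) (hk0 : 0 < k) :
    ((Gd F k ×ˢ Gd F k).filter (fun P => Zm F k d P.1 = Zm F k d P.2)).card
      ≤ Fintype.card F ^ (d + 2) * (Fintype.card F - 1)
        + (k + 1) ^ k * Fintype.card F ^ (d + 2) := by
  classical
  set q := Fintype.card F with hq
  set i0 : Fin k := ⟨0, hk0⟩ with hi0
  set TP := (Gd F k ×ˢ Gd F k).filter (fun P => Zm F k d P.1 = Zm F k d P.2) with hTP
  set Ov : ((Fin k → F) × (Fin k → F)) × ((Fin k → F) × (Fin k → F)) → Prop :=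
    fun P => ∃ i j, P.1.1 i = P.2.1 j with hOv
  have hsplit : (TP.filter (fun P => ¬ Ov P)).card + (TP.filter Ov).card = TP.card := by
    rw [add_comm]; exact Finset.card_filter_add_card_filter_not _
  -- unpack membership helper
  have hmem : ∀ P ∈ TP, (Function.Injective P.1.1 ∧ ∀ i, P.1.2 i ≠ 0)
      ∧ (Function.Injective P.2.1 ∧ ∀ i, P.2.2 i ≠ 0)
      ∧ Zm F k d P.1 = Zm F k d P.2 := by
    intro P hP
    rw [hTP, Finset.mem_filter, Finset.mem_product] at hP
    obtain ⟨⟨h1, h2⟩, h3⟩ := hP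
    rw [Gd, Finset.mem_filter] at h1 h2
    exact ⟨h1.2, h2.2, h3⟩
  have hmom : ∀ (x y x' y' : Fin k → F), Zm F k d (x, y) = Zm F k d (x', y') →
      ∀ j, j ≤ d → ∑ i, y i * x i ^ j = ∑ i, y' i * x' i ^ j := by
    intro x y x' y' hZ j hj
    have h := congrFun hZ ⟨j, by omega⟩
    simpa [Zm] using h
  -- disjoint part
  have hT0 : (TP.filter (fun P => ¬ Ov P)).card ≤ q ^ (d + 2) * (q - 1) := by
    have hb : (TP.filter (fun P => ¬ Ov P)).card
        ≤ ((Finset.univ : Finset (Fin k → F)) ×ˢ ((Finset.univ : Finset (Fin k → F))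
            ×ˢ ((Finset.univ : Finset F).erase 0))).card := by
      refine Finset.card_le_card_of_injOn (fun P => (P.1.1, P.2.1, P.1.2 i0)) ?_ ?_
      · intro P hP
        rw [Finset.mem_coe, Finset.mem_filter] at hP
        obtain ⟨⟨_, hy⟩, _, _⟩ := hmem P hP.1
        simp only [Finset.mem_coe, Finset.mem_product, Finset.mem_univ, true_and, Finset.mem_erase, and_true]
        exact hy i0
      · rintro ⟨⟨x, y⟩, ⟨x', y'⟩⟩ hPm ⟨⟨u, w⟩, ⟨u', w'⟩⟩ hQm heq
        simp only [Finset.mem_coe, Finset.mem_filter] at hPm hQm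
        obtain ⟨⟨hx, hy⟩, ⟨hx', hy'⟩, hZP⟩ := hmem _ hPm.1
        obtain ⟨⟨hu, hw⟩, ⟨hu', hw'⟩, hZQ⟩ := hmem _ hQm.1
        have h1 : x = u := congrArg Prod.fst heq
        have h2 : x' = u' := congrArg (fun t => t.2.1) heq
        have h3 : y i0 = w i0 := congrArg (fun t => t.2.2) heq
        subst h1; subst h2
        have hdisj : ∀ i j, x i ≠ x' j := fun i j h => hPm.2 ⟨i, j, h⟩
        obtain ⟨e1, e2⟩ := uniq_disjoint hk2 i0 x x' y y' w w' hx hx' hdisj h3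
          (hmom x y x' y' hZP) (hmom x w x' w' hZQ)
        rw [e1, e2]
    calc (TP.filter (fun P => ¬ Ov P)).card
        ≤ _ := hb
      _ = q ^ k * (q ^ k * (q - 1)) := by
          simp [Finset.card_product, Finset.card_erase_of_mem, Fintype.card_fun]; rfl
      _ = q ^ (d + 2) * (q - 1) := by
          rw [← mul_assoc, ← pow_add]
          congr 2
          omega
  -- overlap part
  have hT1 : (TP.filter Ov).card ≤ (k + 1) ^ k * q ^ (d + 2) := by
    have hb : (TP.filter Ov).card
        ≤ (Finset.univ : Finset ((Fin k → F) × (Fin k → Option (Fin k)) × (Fin k → F))).card := by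
      refine Finset.card_le_card_of_injOn
        (fun P => (P.1.1,
          fun j => if h : ∃ i, P.1.1 i = P.2.1 j then some h.choose else none,
          fun j => if ∃ i, P.1.1 i = P.2.1 j then P.2.2 j else P.2.1 j))
        (fun P _ => Finset.mem_univ _) ?_
      rintro ⟨⟨x, y⟩, ⟨x', y'⟩⟩ hPm ⟨⟨u, w⟩, ⟨u', w'⟩⟩ hQm heq
      simp only [Finset.mem_coe, Finset.mem_filter] at hPm hQm
      obtain ⟨⟨hx, hy⟩, ⟨hx', hy'⟩, hZP⟩ := hmem _ hPm.1
      obtain ⟨⟨hu, hw⟩, ⟨hu', hw'⟩, hZQ⟩ := hmem _ hQm.1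
      have h1 : x = u := congrArg Prod.fst heq
      subst h1
      have h2 := congrArg (fun t => t.2.1) heq
      have h3 := congrArg (fun t => t.2.2) heq
      simp only at h2 h3
      have hxu : x' = u' := by
        funext j
        have e2 := congrFun h2 j
        have e3 := congrFun h3 j
        by_cases hp : ∃ i, x i = x' j
        · rw [dif_pos hp] at e2
          by_cases hqe : ∃ i, x i = u' j
          · rw [dif_pos hqe] at e2
            have := Option.some.inj e2
            rw [← hp.choose_spec, ← hqe.choose_spec, this]
          · rw [dif_neg hqe] at e2
            exact absurd e2 (by simp)
        · rw [dif_neg hp] at e2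
          by_cases hqe : ∃ i, x i = u' j
          · rw [dif_pos hqe] at e2
            exact absurd e2.symm (by simp)
          · rw [if_neg hp, if_neg hqe] at e3
            exact e3
      subst hxu
      have hagree : ∀ j, (∃ i, x i = x' j) → y' j = w' j := by
        intro j hj
        have e3 := congrFun h3 j
        rwa [if_pos hj, if_pos hj] at e3
      have hov : ∃ i j, x i = x' j := hPm.2
      obtain ⟨e1, e2⟩ := uniq_overlap hk2 x x' y y' w w' hx hx' hov hagree
        (hmom x y x' y' hZP) (hmom x w x' w' hZQ)
      rw [e1, e2]
    calc (TP.filter Ov).card ≤ _ := hb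
      _ = q ^ k * ((k + 1) ^ k * q ^ k) := by
          simp [Fintype.card_fun]; rfl
      _ = (k + 1) ^ k * q ^ (d + 2) := by
          rw [show q ^ k * ((k + 1) ^ k * q ^ k) = (k + 1) ^ k * (q ^ k * q ^ k) by ring,
            ← pow_add]
          congr 2
          omega
  omega

end AuxStmt17

/-- Let `q` be a prime power (`F` the finite field with `q` elements),
`d` an even positive integer, and `k = d/2 + 1`.  Let `R_k^good` be the image under
`Z` of the set of good pairs and `N_g := (∏_{i=0}^{k-1}(q-i)) · (q-1)^k`.  Then
`(q^{d+1} - |R_k^good|) · N_g² ≤ (d+1)^{d+2} · q^{3d+4}`. -/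
theorem stmt_17 (F : Type*) [Field F] [Fintype F] (d k : ℕ)
    (hd : Even d) (hdpos : 0 < d) (hk : k = d / 2 + 1) :
    (Fintype.card F ^ (d + 1) -
        Set.ncard {z : Fin (d + 1) → F | ∃ xy : (Fin k → F) × (Fin k → F),
          Function.Injective xy.1 ∧ (∀ i, xy.2 i ≠ 0) ∧
          (fun j : Fin (d + 1) => ∑ i, xy.2 i * xy.1 i ^ (j : ℕ)) = z}) *
      ((∏ i ∈ Finset.range k, (Fintype.card F - i)) * (Fintype.card F - 1) ^ k) ^ 2 ≤
      (d + 1) ^ (d + 2) * Fintype.card F ^ (3 * d + 4) := by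
  classical
  obtain ⟨r, hr⟩ := hd
  have hk2 : 2 * k = d + 2 := by omega
  have hk0 : 0 < k := by omega
  have hset : {z : Fin (d + 1) → F | ∃ xy : (Fin k → F) × (Fin k → F),
          Function.Injective xy.1 ∧ (∀ i, xy.2 i ≠ 0) ∧
          (fun j : Fin (d + 1) => ∑ i, xy.2 i * xy.1 i ^ (j : ℕ)) = z}
      = ↑((Gd F k).image (Zm F k d)) := by
    ext z
    simp only [Finset.coe_image, Set.mem_image, Finset.mem_coe, Gd, Finset.mem_filter,
      Finset.mem_univ, true_and, Set.mem_setOf_eq]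
    constructor
    · rintro ⟨xy, h1, h2, h3⟩; exact ⟨xy, ⟨h1, h2⟩, h3⟩
    · rintro ⟨xy, ⟨h1, h2⟩, h3⟩; exact ⟨xy, h1, h2, h3⟩
  rw [hset, Set.ncard_coe_finset]
  set q := Fintype.card F with hq
  set Sg := (Gd F k).image (Zm F k d) with hSgdef
  set T := ((Gd F k ×ˢ Gd F k).filter (fun P => Zm F k d P.1 = Zm F k d P.2)).card with hTdef
  set N := (∏ i ∈ Finset.range k, (q - i)) * (q - 1) ^ k with hN
  have hNG : (Gd F k).card = N := card_Gd F k
  have hCS : (Gd F k).card ^ 2 ≤ Sg.card * T := cs_bound F k d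
  have hST : N ^ 2 ≤ Sg.card * T := hNG ▸ hCS
  have hTle : T ≤ q ^ (d + 2) * (q - 1) + (k + 1) ^ k * q ^ (d + 2) := T_le F d k hk2 hk0
  have hSgle : Sg.card ≤ q ^ (d + 1) := by
    have h := Finset.card_le_univ Sg
    simpa [Finset.card_univ, Fintype.card_fun, Fintype.card_fin] using h
  have hNlow : (q - k) ^ (d + 2) ≤ N := by
    have h1 : (q - k) ^ k ≤ ∏ i ∈ Finset.range k, (q - i) := by
      calc (q - k) ^ k = ∏ _i ∈ Finset.range k, (q - k) := by
            rw [Finset.prod_const, Finset.card_range]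
        _ ≤ _ := Finset.prod_le_prod' fun i hi =>
            Nat.sub_le_sub_left (le_of_lt (Finset.mem_range.mp hi)) q
    have h2 : (q - k) ^ k ≤ (q - 1) ^ k :=
      Nat.pow_le_pow_left (Nat.sub_le_sub_left hk0 q) k
    calc (q - k) ^ (d + 2) = (q - k) ^ k * (q - k) ^ k := by
          rw [← pow_add]; congr 1; omega
      _ ≤ N := Nat.mul_le_mul h1 h2
  have hq24 : q ^ (2 * d + 4) ≤ N ^ 2 + (2 * d + 4) * k * q ^ (2 * d + 3) := by
    have h1 := nat_pow_sub_le17 q k (2 * d + 3)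
    have h2 : (q - k) ^ (2 * d + 4) ≤ N ^ 2 := by
      calc (q - k) ^ (2 * d + 4) = ((q - k) ^ (d + 2)) ^ 2 := by
            rw [← pow_mul]; congr 1; ring
        _ ≤ N ^ 2 := Nat.pow_le_pow_left hNlow 2
    calc q ^ (2 * d + 4) = q ^ (2 * d + 3 + 1) := by ring_nf
      _ ≤ (q - k) ^ (2 * d + 3 + 1) + (2 * d + 3 + 1) * k * q ^ (2 * d + 3) := h1
      _ ≤ N ^ 2 + (2 * d + 4) * k * q ^ (2 * d + 3) := by
          have h3 : 2 * d + 3 + 1 = 2 * d + 4 := rfl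
          rw [h3]; gcongr
  have hQT : q ^ (d + 1) * T
      ≤ N ^ 2 + ((2 * d + 4) * k + (k + 1) ^ k) * q ^ (2 * d + 3) := by
    calc q ^ (d + 1) * T
        ≤ q ^ (d + 1) * (q ^ (d + 2) * (q - 1) + (k + 1) ^ k * q ^ (d + 2)) :=
          Nat.mul_le_mul_left _ hTle
      _ = q ^ (2 * d + 3) * (q - 1) + (k + 1) ^ k * q ^ (2 * d + 3) := by ring
      _ ≤ q ^ (2 * d + 3) * q + (k + 1) ^ k * q ^ (2 * d + 3) := by
          gcongr; exact Nat.sub_le q 1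
      _ = q ^ (2 * d + 4) + (k + 1) ^ k * q ^ (2 * d + 3) := by ring
      _ ≤ N ^ 2 + (2 * d + 4) * k * q ^ (2 * d + 3) + (k + 1) ^ k * q ^ (2 * d + 3) := by
          gcongr
      _ = N ^ 2 + ((2 * d + 4) * k + (k + 1) ^ k) * q ^ (2 * d + 3) := by ring
  have hC : (2 * d + 4) * k + (k + 1) ^ k ≤ (d + 1) ^ (d + 2) := by
    have hkd : k ≤ d := by omega
    have h1 : (k + 1) ^ k ≤ (d + 1) ^ d :=
      le_trans (Nat.pow_le_pow_left (by omega) k) (Nat.pow_le_pow_right (by omega) hkd)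
    have h2 : 3 ≤ (d + 1) ^ d :=
      le_trans (by omega) (Nat.le_self_pow (by omega) (d + 1))
    calc (2 * d + 4) * k + (k + 1) ^ k ≤ (2 * d + 4) * d + (d + 1) ^ d :=
          Nat.add_le_add (Nat.mul_le_mul_left _ hkd) h1
      _ ≤ (d + 1) ^ d * ((d + 1) * (d + 1)) := by
          have h3 : 3 * (d * d + 2 * d) ≤ (d + 1) ^ d * (d * d + 2 * d) :=
            Nat.mul_le_mul_right _ h2
          nlinarith [h3]
      _ = (d + 1) ^ (d + 2) := by rw [pow_succ, pow_succ]; ring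
  calc (q ^ (d + 1) - Sg.card) * N ^ 2
      ≤ (q ^ (d + 1) - Sg.card) * (Sg.card * T) := Nat.mul_le_mul_left _ hST
    _ = Sg.card * ((q ^ (d + 1) - Sg.card) * T) := by ring
    _ ≤ q ^ (d + 1) * ((q ^ (d + 1) - Sg.card) * T) := Nat.mul_le_mul_right _ hSgle
    _ = q ^ (d + 1) * (q ^ (d + 1) * T - Sg.card * T) := by rw [Nat.sub_mul]
    _ ≤ q ^ (d + 1) * (q ^ (d + 1) * T - N ^ 2) :=
        Nat.mul_le_mul_left _ (Nat.sub_le_sub_left hST _)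
    _ ≤ q ^ (d + 1) * (((2 * d + 4) * k + (k + 1) ^ k) * q ^ (2 * d + 3)) := by
        refine Nat.mul_le_mul_left _ (Nat.sub_le_iff_le_add.mpr ?_)
        exact hQT.trans_eq (Nat.add_comm _ _)
    _ = ((2 * d + 4) * k + (k + 1) ^ k) * q ^ (3 * d + 4) := by ring
    _ ≤ (d + 1) ^ (d + 2) * q ^ (3 * d + 4) := Nat.mul_le_mul_right _ hC
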